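/- Let A be a ring such that the polynomial ring A[x] is right quasi-invariant. Then the factor ring A/J(A) is commutative. -/
import Mathlib


/-- A ring is *centrally essential* if its center is an essential submodule over the
center, i.e. every nonzero element has a nonzero central multiple by a central element. -/
def IsCentrallyEssential (A : Type*) [Ring A] : Prop :=
  ∀ a : A, a ≠ 0 → ∃ z ∈ Set.center A, a * z ≠ 0 ∧ a * z ∈ Set.center A

/-- A right ideal (submodule of `A` as a right module over itself) is a two-sided ideal
if it is closed under left multiplication. -/
def IsTwoSidedRightIdeal {A : Type*} [Ring A] (I : Submodule Aᵐᵒᵖ A) : Prop :=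
  ∀ a x : A, x ∈ I → a * x ∈ I

/-- A ring is right quasi-invariant if every maximal right ideal is two-sided. -/
def IsRightQuasiInvariant (A : Type*) [Ring A] : Prop :=
  ∀ M : Submodule Aᵐᵒᵖ A, IsCoatom M → IsTwoSidedRightIdeal M

section Aux

variable {R : Type*} [Ring R]

lemma rightIdeal_eq_top_of_one_mem {I : Submodule Rᵐᵒᵖ R} (h : (1 : R) ∈ I) : I = ⊤ := by
  rw [Submodule.eq_top_iff']
  intro x
  have := I.smul_mem (MulOpposite.op x) h
  rwa [op_smul_eq_mul, one_mul] at this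

lemma exists_coatom_right {I : Submodule Rᵐᵒᵖ R} (hI : I ≠ ⊤) :
    ∃ M : Submodule Rᵐᵒᵖ R, IsCoatom M ∧ I ≤ M := by
  have hco : IsCoatomic (Submodule Rᵐᵒᵖ R) := by
    apply CompleteLattice.coatomic_of_top_compact
    have h1 : (⊤ : Submodule Rᵐᵒᵖ R) = Submodule.span Rᵐᵒᵖ {1} := by
      rw [eq_comm, Submodule.eq_top_iff']
      intro x
      exact Submodule.mem_span_singleton.2 ⟨MulOpposite.op x, by
        rw [op_smul_eq_mul, one_mul]⟩
    rw [h1]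
    exact Submodule.singleton_span_isCompactElement 1
  rcases hco.eq_top_or_exists_le_coatom I with h | ⟨M, hM, hle⟩
  · exact absurd h hI
  · exact ⟨M, hM, hle⟩

lemma exists_right_inv_of_forall_coatom {z : R}
    (hz : ∀ M : Submodule Rᵐᵒᵖ R, IsCoatom M → z ∈ M) : ∃ u, (1 - z) * u = 1 := by
  by_contra hcon
  push_neg at hcon
  have hne : Submodule.span Rᵐᵒᵖ {(1 : R) - z} ≠ ⊤ := by
    intro he
    have h1 : (1 : R) ∈ Submodule.span Rᵐᵒᵖ {(1 : R) - z} := he ▸ Submodule.mem_top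
    obtain ⟨c, hc⟩ := Submodule.mem_span_singleton.1 h1
    rw [MulOpposite.smul_eq_mul_unop] at hc
    exact hcon c.unop hc
  obtain ⟨M, hM, hle⟩ := exists_coatom_right hne
  have h1 : (1 : R) - z ∈ M := hle (Submodule.subset_span rfl)
  have h2 : z ∈ M := hz M hM
  exact hM.1 (rightIdeal_eq_top_of_one_mem (by simpa using M.add_mem h1 h2))

lemma isUnit_one_sub_of_forall_coatom {z : R}
    (hz : ∀ M : Submodule Rᵐᵒᵖ R, IsCoatom M → z ∈ M) : IsUnit ((1 : R) - z) := by
  obtain ⟨u, hu⟩ := exists_right_inv_of_forall_coatom hz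
  have hzu : ∀ M : Submodule Rᵐᵒᵖ R, IsCoatom M → -(z * u) ∈ M := by
    intro M hM
    have h' := M.smul_mem (MulOpposite.op u) (hz M hM)
    rw [op_smul_eq_mul] at h'
    exact M.neg_mem h'
  obtain ⟨v, hv⟩ := exists_right_inv_of_forall_coatom hzu
  have he : (1 : R) - -(z * u) = u := by
    have h' : u - z * u = 1 := by rw [← hu, sub_mul, one_mul]
    rw [sub_neg_eq_add, ← h']
    abel
  rw [he] at hv
  have hveq : v = 1 - z := by
    calc v = ((1 - z) * u) * v := by rw [hu, one_mul]
    _ = (1 - z) * (u * v) := by rw [mul_assoc]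
    _ = 1 - z := by rw [hv, mul_one]
  exact ⟨⟨1 - z, u, hu, by rw [← hveq]; exact hv⟩, rfl⟩

end Aux

open Polynomial in
/-- If the polynomial ring `A[x]` is right quasi-invariant, then `A/J(A)` is
commutative. -/
theorem stmt_8 (A : Type*) [Ring A]
    (h : IsRightQuasiInvariant (Polynomial A)) :
    ∀ a b : A, a * b - b * a ∈ (⊥ : Ideal A).jacobson := by
  classical
  -- Step 1: every maximal right ideal of `A` is two-sided.
  have step1 : ∀ M₀ : Submodule Aᵐᵒᵖ A, IsCoatom M₀ → ∀ r m : A, m ∈ M₀ → r * m ∈ M₀ := by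
    intro M₀ hM₀
    -- the preimage of `M₀` under evaluation at 0
    set M : Submodule (Polynomial A)ᵐᵒᵖ (Polynomial A) :=
      { carrier := {f : Polynomial A | f.coeff 0 ∈ M₀}
        add_mem' := fun {f g} hf hg => by
          show (f + g).coeff 0 ∈ M₀
          rw [coeff_add]
          exact M₀.add_mem hf hg
        zero_mem' := by
          show (0 : Polynomial A).coeff 0 ∈ M₀
          simpa using M₀.zero_mem
        smul_mem' := fun c f hf => by
          show (f * c.unop).coeff 0 ∈ M₀
          rw [mul_coeff_zero]
          exact M₀.smul_mem (MulOpposite.op ((c.unop).coeff 0)) hf } with hMdef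
    have hmemM : ∀ f : Polynomial A, f ∈ M ↔ f.coeff 0 ∈ M₀ := fun f => Iff.rfl
    have hMco : IsCoatom M := by
      constructor
      · intro he
        have h1 : (1 : Polynomial A) ∈ M := he ▸ Submodule.mem_top
        rw [hmemM, coeff_one] at h1
        simp only [if_pos] at h1
        exact hM₀.1 (rightIdeal_eq_top_of_one_mem h1)
      · intro P hP
        obtain ⟨f, hfP, hfM⟩ := SetLike.exists_of_lt hP
        have hf0 : f.coeff 0 ∉ M₀ := hfM
        have hQtop : M₀ ⊔ Submodule.span Aᵐᵒᵖ {f.coeff 0} = ⊤ := by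
          apply hM₀.2
          refine lt_of_le_of_ne le_sup_left ?_
          intro he
          exact hf0 (he ▸ Submodule.mem_sup_right
            (Submodule.mem_span_singleton.2 ⟨1, one_smul _ _⟩))
        have h1 : (1 : A) ∈ M₀ ⊔ Submodule.span Aᵐᵒᵖ {f.coeff 0} := hQtop ▸ Submodule.mem_top
        obtain ⟨m, hm, y, hy, hsum⟩ := Submodule.mem_sup.1 h1
        obtain ⟨c, hc⟩ := Submodule.mem_span_singleton.1 hy
        have hy' : y = f.coeff 0 * c.unop := by
          rw [← hc, MulOpposite.smul_eq_mul_unop]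
        -- build an element of `P` with constant coefficient `1`
        have hg : (C m + f * C c.unop) ∈ P := by
          refine P.add_mem (hP.le ?_) ?_
          · rw [hmemM, coeff_C]
            simpa using hm
          · have h' := P.smul_mem (MulOpposite.op (C c.unop : Polynomial A)) hfP
            rwa [op_smul_eq_mul] at h'
        have hg0 : (C m + f * C c.unop).coeff 0 = 1 := by
          rw [coeff_add, mul_coeff_zero, coeff_C, coeff_C]
          simp only [if_pos]
          rw [← hy']
          exact hsum
        have hone : (1 : Polynomial A) ∈ P := by
          have hd : (C m + f * C c.unop) - 1 ∈ P := by
            apply hP.le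
            rw [hmemM, coeff_sub, hg0, coeff_one]
            simpa using M₀.zero_mem
          simpa using P.sub_mem hg hd
        exact rightIdeal_eq_top_of_one_mem hone
    have hts := h M hMco
    intro r m hm
    have hCm : (C m : Polynomial A) ∈ M := by
      rw [hmemM, coeff_C]
      simpa using hm
    have h2 : (C r : Polynomial A) * C m ∈ M := hts (C r) (C m) hCm
    rw [← map_mul, hmemM, coeff_C] at h2
    simpa using h2
  -- Step 2: every commutator lies in every maximal right ideal of `A`.
  have step2 : ∀ a b : A, ∀ M₀ : Submodule Aᵐᵒᵖ A, IsCoatom M₀ → a * b - b * a ∈ M₀ := by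
    intro a b M₀ hM₀
    -- the right ideal of polynomials with all coefficients in `M₀`
    set P : Submodule (Polynomial A)ᵐᵒᵖ (Polynomial A) :=
      { carrier := {f : Polynomial A | ∀ i, f.coeff i ∈ M₀}
        add_mem' := fun {f g} hf hg => by
          intro i
          show (f + g).coeff i ∈ M₀
          rw [coeff_add]
          exact M₀.add_mem (hf i) (hg i)
        zero_mem' := fun i => by
          show (0 : Polynomial A).coeff i ∈ M₀
          simpa using M₀.zero_mem
        smul_mem' := fun c f hf => by
          intro i
          show (f * c.unop).coeff i ∈ M₀
          rw [coeff_mul]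
          exact Submodule.sum_mem _ fun x _ =>
            M₀.smul_mem (MulOpposite.op ((c.unop).coeff x.2)) (hf x.1) } with hPdef
    set N : Submodule (Polynomial A)ᵐᵒᵖ (Polynomial A) :=
      P ⊔ Submodule.span (Polynomial A)ᵐᵒᵖ {X - C a} with hNdef
    have hNtop : N ≠ ⊤ := by
      intro he
      have h1 : (1 : Polynomial A) ∈ N := he ▸ Submodule.mem_top
      obtain ⟨p, hp, q, hq, hsum⟩ := Submodule.mem_sup.1 h1
      obtain ⟨c, hc⟩ := Submodule.mem_span_singleton.1 hq
      set s : Polynomial A := c.unop with hs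
      have hq' : q = (X - C a) * s := by
        rw [← hc, MulOpposite.smul_eq_mul_unop]
      have hps : p + (X - C a) * s = 1 := by rw [← hq']; exact hsum
      have hpm : ∀ i, p.coeff i ∈ M₀ := hp
      -- coefficient recursion
      have hcoeffs : ∀ i, ((X - C a) * s).coeff (i + 1) = s.coeff i - a * s.coeff (i + 1) := by
        intro i
        rw [sub_mul, coeff_sub, coeff_X_mul, coeff_C_mul]
      have hcoeff0 : ((X - C a) * s).coeff 0 = -(a * s.coeff 0) := by
        rw [sub_mul, coeff_sub, mul_coeff_zero, coeff_X_zero, coeff_C_mul, zero_mul, zero_sub]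
      have hstep : ∀ i, s.coeff i - a * s.coeff (i + 1) ∈ M₀ := by
        intro i
        have he1 : p.coeff (i + 1) + ((X - C a) * s).coeff (i + 1) = 0 := by
          rw [← coeff_add, hps, coeff_one]
          simp
        rw [hcoeffs i] at he1
        have h6 : s.coeff i - a * s.coeff (i + 1) = -p.coeff (i + 1) := by
          rw [← zero_sub, ← he1]
          abel
        rw [h6]
        exact M₀.neg_mem (hpm (i + 1))
      have hclaim : ∀ k, a * s.coeff 0 - a ^ (k + 1) * s.coeff k ∈ M₀ := by
        intro k
        induction k with
        | zero => simpa using M₀.zero_mem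
        | succ k ih =>
          have h2 : a ^ (k + 1) * (s.coeff k - a * s.coeff (k + 1)) ∈ M₀ :=
            step1 M₀ hM₀ _ _ (hstep k)
          have h3 := M₀.add_mem ih h2
          have he : a * s.coeff 0 - a ^ (k + 1 + 1) * s.coeff (k + 1) =
              (a * s.coeff 0 - a ^ (k + 1) * s.coeff k) +
                a ^ (k + 1) * (s.coeff k - a * s.coeff (k + 1)) := by
            rw [mul_sub, pow_succ, mul_assoc]
            abel
          rw [he]
          exact h3
      have hzero : s.coeff (s.natDegree + 1) = 0 := coeff_natDegree_succ_eq_zero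
      have has0 : a * s.coeff 0 ∈ M₀ := by
        have h4 := hclaim (s.natDegree + 1)
        rwa [hzero, mul_zero, sub_zero] at h4
      have h1M : (1 : A) ∈ M₀ := by
        have he0 : p.coeff 0 + ((X - C a) * s).coeff 0 = 1 := by
          rw [← coeff_add, hps, coeff_one]
          simp
        rw [← he0, hcoeff0]
        exact M₀.add_mem (hpm 0) (M₀.neg_mem has0)
      exact hM₀.1 (rightIdeal_eq_top_of_one_mem h1M)
    obtain ⟨M, hMco, hNM⟩ := exists_coatom_right hNtop
    have hts := h M hMco
    have hXa : (X - C a : Polynomial A) ∈ M :=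
      hNM (Submodule.mem_sup_right (Submodule.mem_span_singleton.2 ⟨1, one_smul _ _⟩))
    -- the commutator lies in M
    have hcomm : (C (a * b - b * a) : Polynomial A) ∈ M := by
      have h1 : (C a - X) * C b ∈ M := by
        have h' := M.smul_mem (MulOpposite.op (C b : Polynomial A)) (M.neg_mem hXa)
        rwa [op_smul_eq_mul, neg_sub] at h'
      have h2 : (C b : Polynomial A) * (C a - X) ∈ M := by
        have h' := hts (C b) (-(X - C a)) (M.neg_mem hXa)
        rwa [neg_sub] at h'
      have he : (C (a * b - b * a) : Polynomial A) =
          (C a - X) * C b - C b * (C a - X) := by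
        rw [map_sub, map_mul, map_mul, sub_mul, mul_sub, X_mul]
        abel
      rw [he]
      exact M.sub_mem h1 h2
    -- pull back to A
    have hM0' : ∀ r : A, (C r : Polynomial A) ∈ M → r ∈ M₀ := by
      intro r hr
      by_contra hrM
      -- the right ideal {x | C x ∈ M} contains M₀ and r, hence is ⊤
      set M₀' : Submodule Aᵐᵒᵖ A :=
        { carrier := {x : A | (C x : Polynomial A) ∈ M}
          add_mem' := fun {x y} hx hy => by
            show (C (x + y) : Polynomial A) ∈ M
            rw [map_add]
            exact M.add_mem hx hy
          zero_mem' := by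
            show (C (0 : A) : Polynomial A) ∈ M
            simpa using M.zero_mem
          smul_mem' := fun c x hx => by
            show (C (x * c.unop) : Polynomial A) ∈ M
            rw [map_mul]
            have h' := M.smul_mem (MulOpposite.op (C c.unop : Polynomial A)) hx
            rwa [op_smul_eq_mul] at h' } with hM₀'def
      have hle : M₀ ≤ M₀' := by
        intro m hm
        show (C m : Polynomial A) ∈ M
        refine hNM (Submodule.mem_sup_left ?_)
        intro i
        show (C m : Polynomial A).coeff i ∈ M₀
        rw [coeff_C]
        split
        · exact hm
        · exact M₀.zero_mem
      have hlt : M₀ < M₀' := lt_of_le_of_ne hle (fun he => hrM (he ▸ hr))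
      have htop : M₀' = ⊤ := hM₀.2 _ hlt
      have h1 : (1 : A) ∈ M₀' := htop ▸ Submodule.mem_top
      have h1' : (1 : Polynomial A) ∈ M := by
        have : (C (1 : A) : Polynomial A) ∈ M := h1
        rwa [map_one] at this
      exact hMco.1 (rightIdeal_eq_top_of_one_mem h1')
    exact hM0' _ hcomm
  -- Step 3: conclude membership in the Jacobson radical.
  intro a b
  rw [Ideal.jacobson, Submodule.mem_sInf]
  rintro L ⟨-, hL⟩
  by_contra hc
  set c : A := a * b - b * a with hcdef
  have htop : L ⊔ Ideal.span {c} = ⊤ := by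
    apply hL.out.2
    refine lt_of_le_of_ne le_sup_left ?_
    intro he
    exact hc (he ▸ Submodule.mem_sup_right (Ideal.subset_span rfl))
  have h1 : (1 : A) ∈ L ⊔ Ideal.span {c} := htop ▸ Submodule.mem_top
  obtain ⟨l, hl, y, hy, hsum⟩ := Submodule.mem_sup.1 h1
  obtain ⟨d, hd⟩ := Ideal.mem_span_singleton'.1 hy
  have hlu : l = 1 - d * c := by
    rw [← hd] at hsum
    exact eq_sub_of_add_eq hsum
  have hunit : IsUnit ((1 : A) - d * c) := by
    apply isUnit_one_sub_of_forall_coatom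
    intro M₀ hM₀
    exact step1 M₀ hM₀ d c (step2 a b M₀ hM₀)
  rw [← hlu] at hunit
  exact hL.out.1 (Ideal.eq_top_of_isUnit_mem L hl hunit)
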